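/- arXiv:2209.12785 — 3 statements merged into one kernel-verified Lean document; each statement's English description precedes it below -/
import Mathlib

section
/- For K=2, the XP-HARQ outage probability equals P_out,2 = (1 − e^{−(σ²/P1)(2^{R1}−1)})·(1 − e^{−(σ²/P2)(2^{R2}−1)}) + e^{−(σ²/P2)(2^{R2}−1)} − e^{−(σ²/P2)(2^{R1+R2}−1)} − φ(R1,R2), where φ(R1,R2) = (σ²/P2)·e^{σ²/P1 + σ²/P2}·∫_{2^{R2}}^{2^{R1+R2}} exp(−2^{R1+R2}σ²/(z·P1) − σ²z/P2) dz. -/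
open MeasureTheory ProbabilityTheory Real Filter

/-- `φ(R₁,R₂) = (σ²/P₂)·e^{σ²/P₁ + σ²/P₂}·∫_{2^{R₂}}^{2^{R₁+R₂}}
      exp(−2^{R₁+R₂}σ²/(z·P₁) − σ²z/P₂) dz`. -/
noncomputable def phiXP (σ2 P1 P2 R1 R2 : ℝ) : ℝ :=
  (σ2 / P2) * Real.exp (σ2 / P1 + σ2 / P2) *
    ∫ z in ((2:ℝ) ^ R2)..((2:ℝ) ^ (R1 + R2)),
      Real.exp (-((2:ℝ) ^ (R1 + R2) * σ2 / (z * P1)) - σ2 * z / P2)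

section Helpers
open Set intervalIntegral
open scoped ENNReal


lemma expMeasure_apply (r : ℝ) {s : Set ℝ} (hs : MeasurableSet s) :
    expMeasure r s = ∫⁻ x in s, exponentialPDF r x := by
  rw [expMeasure, gammaMeasure, withDensity_apply _ hs]
  rfl

lemma expMeasure_Iio_neg (r : ℝ) : expMeasure r (Iio 0) = 0 := by
  rw [expMeasure_apply r measurableSet_Iio]
  exact lintegral_exponentialPDF_of_nonpos le_rfl

lemma expMeasure_Iio {r : ℝ} (hr : 0 < r) {t : ℝ} (ht : 0 ≤ t) :
    expMeasure r (Iio t) = ENNReal.ofReal (1 - exp (-(r*t))) := by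
  rw [expMeasure_apply r measurableSet_Iio,
    setLIntegral_congr (Iio_ae_eq_Iic (μ := volume) (a := t)),
    lintegral_exponentialPDF_eq_antiDeriv hr t, if_pos ht]


lemma key_calc (l1 l2 A C : ℝ) (hl1 : 0 < l1) (hl2 : 0 < l2) (hA : 1 < A) (hC : 1 < C) :
    ∫ x in (0:ℝ)..(A-1), l1 * exp (-(l1*x)) * (1 - exp (-(l2 * ((A*C)/(1+x) - 1))))
    = 1 - exp (-(l1*(A-1))) - exp (-(l2*(A*C-1))) + exp (-(l1*(A-1)) - l2*(C-1))
      - l2 * exp (l1+l2) * ∫ z in C..(A*C), exp (-(l1*(A*C)/z) - l2*z) := by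
  set B := A * C with hB
  have hApos : (0:ℝ) < A := lt_trans one_pos hA
  have hBA : A < B := by
    have := (mul_lt_mul_iff_right₀ hApos).mpr hC
    simpa using this
  have hBpos : 0 < B := lt_trans hApos hBA
  have hIcc : uIcc (0:ℝ) (A-1) = Icc 0 (A-1) := uIcc_of_le (by linarith)
  have hx1 : ∀ x ∈ Icc (0:ℝ) (A-1), (0:ℝ) < 1 + x := fun x hx => by
    have := hx.1; linarith
  set K : ℝ → ℝ := fun x => exp (-(l1*x) - l2*(B/(1+x)-1)) with hK
  have hf' : ∀ x ∈ Icc (0:ℝ) (A-1), HasDerivAt (fun x => B/(1+x)) (-(B/(1+x)^2)) x := by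
    intro x hx
    have h1 : HasDerivAt (fun x : ℝ => 1 + x) 1 x := (hasDerivAt_id x).const_add 1
    have h2 : HasDerivAt (fun x : ℝ => (1+x)⁻¹) (-1/(1+x)^2) x :=
      h1.inv (ne_of_gt (hx1 x hx))
    have h3 : HasDerivAt (fun y : ℝ => B * (1+y)⁻¹) (B * (-1/(1+x)^2)) x := h2.const_mul B
    have h4 : HasDerivAt (fun y : ℝ => B / (1+y)) (B * (-1/(1+x)^2)) x := by
      simpa only [div_eq_mul_inv] using h3
    convert h4 using 1
    ring
  have hKderiv : ∀ x ∈ Icc (0:ℝ) (A-1),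
      HasDerivAt K ((l2*(B/(1+x)^2) - l1) * K x) x := by
    intro x hx
    have hw : HasDerivAt (fun x => -(l1*x) - l2*(B/(1+x)-1))
        (-(l1*1) - l2*(-(B/(1+x)^2))) x := by
      have h1 : HasDerivAt (fun x : ℝ => l1*x) (l1*1) x := (hasDerivAt_id x).const_mul l1
      have h2 : HasDerivAt (fun x : ℝ => l2*(B/(1+x)-1)) (l2*(-(B/(1+x)^2))) x :=
        (((hf' x hx).sub_const 1)).const_mul l2
      exact h1.neg.sub h2
    have := hw.exp
    convert this using 1
    simp only [hK]
    ring
  have hKcont : ContinuousOn K (Icc 0 (A-1)) := by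
    apply ContinuousOn.rexp
    apply ContinuousOn.sub
    · exact (continuous_const.mul continuous_id).neg.continuousOn
    · apply ContinuousOn.mul continuousOn_const
      apply ContinuousOn.sub _ continuousOn_const
      exact ContinuousOn.div continuousOn_const
        (continuous_const.add continuous_id).continuousOn
        (fun x hx => ne_of_gt (hx1 x hx))
  have hfraccont : ContinuousOn (fun x => B/(1+x)^2) (Icc (0:ℝ) (A-1)) := by
    apply ContinuousOn.div continuousOn_const
    · exact ((continuous_const.add continuous_id).pow 2).continuousOn
    · exact fun x hx => pow_ne_zero 2 (ne_of_gt (hx1 x hx))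
  have hcont1 : Continuous (fun x : ℝ => l1 * exp (-(l1*x))) :=
    continuous_const.mul (((continuous_const.mul continuous_id).neg).rexp)
  have I1 : ∫ x in (0:ℝ)..(A-1), l1 * exp (-(l1*x)) = 1 - exp (-(l1*(A-1))) := by
    have := intervalIntegral.integral_eq_sub_of_hasDerivAt
      (f := fun x => -exp (-(l1*x))) (f' := fun x => l1 * exp (-(l1*x)))
      (a := (0:ℝ)) (b := A-1)
      (fun x _ => ProbabilityTheory.hasDerivAt_neg_exp_mul_exp)
      (hcont1.intervalIntegrable _ _)
    rw [this]
    simp only [mul_zero, neg_zero, Real.exp_zero]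
    ring
  have hKint : IntervalIntegrable K volume 0 (A-1) := by
    rw [intervalIntegrable_iff_integrableOn_Icc_of_le (by linarith)]
    exact hKcont.integrableOn_Icc
  have hfKint : IntervalIntegrable (fun x => B/(1+x)^2 * K x) volume 0 (A-1) := by
    rw [intervalIntegrable_iff_integrableOn_Icc_of_le (by linarith)]
    exact (hfraccont.mul hKcont).integrableOn_Icc
  have I2 : ∫ x in (0:ℝ)..(A-1), (l2*(B/(1+x)^2) - l1) * K x
      = K (A-1) - K 0 := by
    apply intervalIntegral.integral_eq_sub_of_hasDerivAt
    · intro x hx; exact hKderiv x (hIcc ▸ hx)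
    · rw [intervalIntegrable_iff_integrableOn_Icc_of_le (by linarith)]
      exact (((continuousOn_const.mul hfraccont).sub continuousOn_const).mul hKcont).integrableOn_Icc
  set g : ℝ → ℝ := fun z => exp (-(l1*B/z) - l2*z) with hg
  have hsub : ∫ x in (0:ℝ)..(A-1), B/(1+x)^2 * K x
      = exp (l1+l2) * ∫ z in C..B, g z := by
    have himg : ∀ x ∈ Icc (0:ℝ) (A-1), (0:ℝ) < B/(1+x) := fun x hx =>
      div_pos hBpos (hx1 x hx)
    have hgcont : ContinuousOn g ((fun x => B/(1+x)) '' uIcc 0 (A-1)) := by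
      apply ContinuousOn.mono (s := {z : ℝ | 0 < z})
      · apply ContinuousOn.rexp
        apply ContinuousOn.sub
        · exact (ContinuousOn.div continuousOn_const continuousOn_id
            (fun z hz => ne_of_gt hz)).neg
        · exact (continuous_const.mul continuous_id).continuousOn
      · rintro z ⟨x, hx, rfl⟩
        exact himg x (hIcc ▸ hx)
    have hmain := intervalIntegral.integral_comp_smul_deriv'
      (f := fun x => B/(1+x)) (f' := fun x => -(B/(1+x)^2)) (g := g)
      (a := (0:ℝ)) (b := A-1)
      (fun x hx => hf' x (hIcc ▸ hx))
      (by rw [hIcc]; exact hfraccont.neg)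
      hgcont
    have hf0 : B/(1+(0:ℝ)) = B := by norm_num
    have hfA : B/(1+(A-1)) = C := by
      rw [show (1:ℝ)+(A-1) = A by ring, hB, mul_comm, mul_div_assoc,
        div_self (ne_of_gt hApos), mul_one]
    have this2 : ∫ x in (0:ℝ)..(A-1), -(B/(1+x)^2) * g (B/(1+x)) = ∫ z in B..C, g z := by
      simpa only [smul_eq_mul, hf0, hfA, Function.comp_apply] using hmain
    have heq2 : EqOn (fun x => B/(1+x)^2 * K x)
        (fun x => exp (l1+l2) * -(-(B/(1+x)^2) * g (B/(1+x)))) (uIcc 0 (A-1)) := by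
      rw [hIcc]
      intro x hx
      have h1x := hx1 x hx
      have hBB : B/(B/(1+x)) = 1+x := by
        rw [div_div_eq_mul_div, mul_comm, mul_div_assoc, div_self (ne_of_gt hBpos), mul_one]
      simp only [hg, hK, neg_mul, neg_neg, mul_div_assoc, hBB]
      rw [mul_left_comm, ← Real.exp_add]
      congr 2
      ring
    rw [intervalIntegral.integral_congr heq2, intervalIntegral.integral_const_mul,
      intervalIntegral.integral_neg, this2, ← intervalIntegral.integral_symm]
  have hsplit : ∫ x in (0:ℝ)..(A-1), l1 * exp (-(l1*x)) * (1 - exp (-(l2 * (B/(1+x) - 1))))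
      = (∫ x in (0:ℝ)..(A-1), l1 * exp (-(l1*x))) - l1 * ∫ x in (0:ℝ)..(A-1), K x := by
    rw [← intervalIntegral.integral_const_mul, ← intervalIntegral.integral_sub
      (hcont1.intervalIntegrable _ _) (hKint.const_mul l1)]
    apply intervalIntegral.integral_congr
    intro x _
    simp only [hK]
    rw [mul_sub, mul_one, mul_assoc, ← Real.exp_add]
    congr 2 <;> ring
  have I2' : l2 * (∫ x in (0:ℝ)..(A-1), B/(1+x)^2 * K x) - l1 * (∫ x in (0:ℝ)..(A-1), K x)
      = K (A-1) - K 0 := by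
    rw [← intervalIntegral.integral_const_mul, ← intervalIntegral.integral_const_mul,
      ← intervalIntegral.integral_sub (hfKint.const_mul l2) (hKint.const_mul l1), ← I2]
    apply intervalIntegral.integral_congr
    intro x _; ring
  have hBA' : B / A = C := by
    rw [hB, mul_comm, mul_div_assoc, div_self (ne_of_gt hApos), mul_one]
  have hKA : K (A-1) = exp (-(l1*(A-1)) - l2*(C-1)) := by
    simp only [hK]
    rw [show (1:ℝ)+(A-1) = A by ring, hBA']
  have hK0 : K 0 = exp (-(l2*(B-1))) := by
    simp only [hK]; norm_num
  rw [hsplit, I1]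
  have hfin : l1 * ∫ x in (0:ℝ)..(A-1), K x
      = l2 * exp (l1+l2) * (∫ z in C..B, g z) - (K (A-1) - K 0) := by
    have h0 := I2'
    rw [hsub, ← mul_assoc] at h0
    linarith
  rw [hfin, hKA, hK0]
  simp only [hg]
  ring

end Helpers

section MainProof
open Set
open scoped ENNReal

/-- For `K = 2`, the XP-HARQ outage probability equals
`(1 − e^{−(σ²/P₁)(2^{R₁}−1)})·(1 − e^{−(σ²/P₂)(2^{R₂}−1)})
  + e^{−(σ²/P₂)(2^{R₂}−1)} − e^{−(σ²/P₂)(2^{R₁+R₂}−1)} − φ(R₁,R₂)`. -/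
theorem outage_K2_closed_form
    {Ω : Type*} [MeasurableSpace Ω] (μ : Measure Ω) [IsProbabilityMeasure μ]
    (σ2 P1 P2 R1 R2 : ℝ) (hσ : 0 < σ2) (hP1 : 0 < P1) (hP2 : 0 < P2)
    (hR1 : 0 < R1) (hR2 : 0 < R2)
    (γ1 γ2 : Ω → ℝ) (hm1 : Measurable γ1) (hm2 : Measurable γ2)
    (hind : IndepFun γ1 γ2 μ)
    (hd1 : Measure.map γ1 μ = expMeasure (σ2 / P1))
    (hd2 : Measure.map γ2 μ = expMeasure (σ2 / P2)) :
    (μ {ω | Real.logb 2 (1 + γ1 ω) < R1 ∧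
        Real.logb 2 (1 + γ1 ω) + Real.logb 2 (1 + γ2 ω) < R1 + R2}).toReal
      = (1 - Real.exp (-(σ2 / P1) * ((2:ℝ) ^ R1 - 1)))
          * (1 - Real.exp (-(σ2 / P2) * ((2:ℝ) ^ R2 - 1)))
        + Real.exp (-(σ2 / P2) * ((2:ℝ) ^ R2 - 1))
        - Real.exp (-(σ2 / P2) * ((2:ℝ) ^ (R1 + R2) - 1))
        - phiXP σ2 P1 P2 R1 R2 := by
  have hl1 : 0 < σ2 / P1 := div_pos hσ hP1
  have hl2 : 0 < σ2 / P2 := div_pos hσ hP2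
  set l1 := σ2 / P1 with hl1def
  set l2 := σ2 / P2 with hl2def
  set A := (2:ℝ) ^ R1 with hAdef
  set C := (2:ℝ) ^ R2 with hCdef
  have hA : 1 < A := by
    rw [hAdef]
    exact (Real.one_lt_rpow_iff_of_pos two_pos).mpr (Or.inl ⟨one_lt_two, hR1⟩)
  have hC : 1 < C := by
    rw [hCdef]
    exact (Real.one_lt_rpow_iff_of_pos two_pos).mpr (Or.inl ⟨one_lt_two, hR2⟩)
  have hBrw : (2:ℝ) ^ (R1 + R2) = A * C := Real.rpow_add two_pos R1 R2
  have hApos : (0:ℝ) < A := lt_trans one_pos hA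
  have hABlt : A < A * C := by
    have := (mul_lt_mul_iff_right₀ hApos).mpr hC
    simpa using this
  haveI i1 : IsProbabilityMeasure (expMeasure l1) := isProbabilityMeasure_expMeasure hl1
  haveI i2 : IsProbabilityMeasure (expMeasure l2) := isProbabilityMeasure_expMeasure hl2
  -- a.e. nonnegativity
  have hae1 : ∀ᵐ ω ∂μ, 0 ≤ γ1 ω := by
    rw [ae_iff]
    have hset : {ω | ¬ 0 ≤ γ1 ω} = γ1 ⁻¹' (Iio 0) := by ext ω; simp [not_le]
    rw [hset, ← Measure.map_apply hm1 measurableSet_Iio, hd1, expMeasure_Iio_neg]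
  have hae2 : ∀ᵐ ω ∂μ, 0 ≤ γ2 ω := by
    rw [ae_iff]
    have hset : {ω | ¬ 0 ≤ γ2 ω} = γ2 ⁻¹' (Iio 0) := by ext ω; simp [not_le]
    rw [hset, ← Measure.map_apply hm2 measurableSet_Iio, hd2, expMeasure_Iio_neg]
  -- rewrite the event
  have hSet : {ω | Real.logb 2 (1 + γ1 ω) < R1 ∧
        Real.logb 2 (1 + γ1 ω) + Real.logb 2 (1 + γ2 ω) < R1 + R2}
      =ᵐ[μ] {ω | γ1 ω < A - 1 ∧ (1 + γ1 ω) * (1 + γ2 ω) < A * C} := by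
    filter_upwards [hae1, hae2] with ω h1 h2
    have hx : (0:ℝ) < 1 + γ1 ω := by linarith
    have hy : (0:ℝ) < 1 + γ2 ω := by linarith
    have i1' : Real.logb 2 (1 + γ1 ω) < R1 ↔ γ1 ω < A - 1 := by
      rw [Real.logb_lt_iff_lt_rpow one_lt_two hx, ← hAdef]
      constructor <;> intro <;> linarith
    have i2' : Real.logb 2 (1 + γ1 ω) + Real.logb 2 (1 + γ2 ω) < R1 + R2 ↔
        (1 + γ1 ω) * (1 + γ2 ω) < A * C := by
      rw [← Real.logb_mul (ne_of_gt hx) (ne_of_gt hy),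
        Real.logb_lt_iff_lt_rpow one_lt_two (mul_pos hx hy), hBrw]
    simp only [Set.mem_setOf_eq, eq_iff_iff]
    exact and_congr i1' i2'
  rw [measure_congr hSet]
  -- to the product measure
  have hT : MeasurableSet {p : ℝ × ℝ | p.1 < A - 1 ∧ (1 + p.1) * (1 + p.2) < A * C} := by
    apply MeasurableSet.inter
    · exact measurableSet_lt measurable_fst measurable_const
    · exact measurableSet_lt
        ((measurable_const.add measurable_fst).mul (measurable_const.add measurable_snd))
        measurable_const
  have hmap : Measure.map (fun ω => (γ1 ω, γ2 ω)) μ = (expMeasure l1).prod (expMeasure l2) := by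
    rw [← hd1, ← hd2]
    exact (indepFun_iff_map_prod_eq_prod_map_map hm1.aemeasurable hm2.aemeasurable).mp hind
  have hμT : μ {ω | γ1 ω < A - 1 ∧ (1 + γ1 ω) * (1 + γ2 ω) < A * C}
      = ((expMeasure l1).prod (expMeasure l2))
          {p : ℝ × ℝ | p.1 < A - 1 ∧ (1 + p.1) * (1 + p.2) < A * C} := by
    rw [← hmap, Measure.map_apply (hm1.prodMk hm2) hT]
    rfl
  rw [hμT, Measure.prod_apply hT]
  -- compute the inner measure and reduce to an indicator
  set h : ℝ → ℝ := fun x => l1 * exp (-(l1*x)) * (1 - exp (-(l2 * ((A*C)/(1+x) - 1)))) with hh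
  set F : ℝ → ℝ≥0∞ := fun x => expMeasure l2 (Prod.mk x ⁻¹'
      {p : ℝ × ℝ | p.1 < A - 1 ∧ (1 + p.1) * (1 + p.2) < A * C}) with hF
  have hFmeas : Measurable F := measurable_measure_prodMk_left hT
  have hpdfmeas : Measurable (exponentialPDF l1) :=
    (measurable_exponentialPDFReal l1).ennreal_ofReal
  have hExpDef : expMeasure l1 = volume.withDensity (exponentialPDF l1) := rfl
  rw [hExpDef, lintegral_withDensity_eq_lintegral_mul volume hpdfmeas hFmeas]
  have hpt : ∀ x, (exponentialPDF l1 * F) x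
      = Set.indicator (Ico 0 (A-1)) (fun x => ENNReal.ofReal (h x)) x := by
    intro x
    rw [Pi.mul_apply]
    by_cases hx0 : 0 ≤ x
    · by_cases hxA : x < A - 1
      · have hx1 : (0:ℝ) < 1 + x := by linarith
        have hslice : Prod.mk x ⁻¹'
            {p : ℝ × ℝ | p.1 < A - 1 ∧ (1 + p.1) * (1 + p.2) < A * C}
            = Iio ((A*C)/(1+x) - 1) := by
          ext y
          simp only [mem_preimage, mem_setOf_eq, mem_Iio]
          constructor
          · rintro ⟨-, hlt⟩
            have h2 : (1+y)*(1+x) < A*C := by rw [mul_comm]; exact hlt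
            have := (lt_div_iff₀ hx1).mpr h2
            linarith
          · intro hy
            refine ⟨hxA, ?_⟩
            have h2 : 1 + y < (A*C)/(1+x) := by linarith
            have := (lt_div_iff₀ hx1).mp h2
            rw [mul_comm] at this
            linarith
        have ht0 : 0 ≤ (A*C)/(1+x) - 1 := by
          have h2 : (1:ℝ)*(1+x) ≤ A*C := by nlinarith
          have := (le_div_iff₀ hx1).mpr h2
          linarith
        simp only [hF]
        rw [hslice, expMeasure_Iio hl2 ht0, exponentialPDF_of_nonneg hx0,
          ← ENNReal.ofReal_mul (mul_nonneg hl1.le (exp_pos _).le),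
          Set.indicator_of_mem (mem_Ico.mpr ⟨hx0, hxA⟩)]
      · have hslice : Prod.mk x ⁻¹'
            {p : ℝ × ℝ | p.1 < A - 1 ∧ (1 + p.1) * (1 + p.2) < A * C} = ∅ := by
          ext y
          simp only [mem_preimage, mem_setOf_eq, mem_empty_iff_false, iff_false, not_and]
          intro hlt
          exact absurd hlt hxA
        simp only [hF]
        rw [hslice, measure_empty, mul_zero,
          Set.indicator_of_notMem (fun hmem => hxA (mem_Ico.mp hmem).2)]
    · rw [exponentialPDF_of_neg (lt_of_not_ge hx0), zero_mul,
        Set.indicator_of_notMem (fun hmem => hx0 (mem_Ico.mp hmem).1)]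
  rw [lintegral_congr hpt, lintegral_indicator measurableSet_Ico _]
  -- convert to a real integral
  have hAm1 : (0:ℝ) ≤ A - 1 := by linarith
  have hconth : ContinuousOn h (Icc 0 (A-1)) := by
    rw [hh]
    apply ContinuousOn.mul
    · exact (continuous_const.mul ((continuous_const.mul continuous_id).neg.rexp)).continuousOn
    · apply ContinuousOn.sub continuousOn_const
      apply ContinuousOn.rexp
      apply ContinuousOn.neg
      apply ContinuousOn.mul continuousOn_const
      apply ContinuousOn.sub _ continuousOn_const
      exact ContinuousOn.div continuousOn_const
        (continuous_const.add continuous_id).continuousOn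
        (fun x hx => by have := hx.1; positivity)
  have hint : IntegrableOn h (Ico 0 (A-1)) volume :=
    (hconth.integrableOn_Icc).mono_set Ico_subset_Icc_self
  have hnn : ∀ᵐ x ∂(volume.restrict (Ico 0 (A-1))), 0 ≤ h x := by
    refine (ae_restrict_iff' measurableSet_Ico).mpr (ae_of_all _ ?_)
    intro x hx
    have hx1 : (0:ℝ) < 1 + x := by have := hx.1; linarith
    have ht0 : 0 ≤ (A*C)/(1+x) - 1 := by
      have h2 : (1:ℝ)*(1+x) ≤ A*C := by
        rw [one_mul]
        have := hx.2
        linarith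
      have := (le_div_iff₀ hx1).mpr h2
      linarith
    simp only [hh]
    apply mul_nonneg (mul_nonneg hl1.le (exp_pos _).le)
    have hle1 : exp (-(l2 * ((A*C)/(1+x) - 1))) ≤ 1 :=
      Real.exp_le_one_iff.mpr (neg_nonpos.mpr (mul_nonneg hl2.le ht0))
    linarith
  rw [← ofReal_integral_eq_lintegral_ofReal hint hnn,
    ENNReal.toReal_ofReal (integral_nonneg_of_ae hnn),
    integral_Ico_eq_integral_Ioo, ← integral_Ioc_eq_integral_Ioo,
    ← intervalIntegral.integral_of_le hAm1]
  simp only [hh]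
  rw [key_calc l1 l2 A C hl1 hl2 hA hC]
  unfold phiXP
  rw [hBrw, ← hCdef, ← hl1def, ← hl2def]
  have hintg : (fun z => rexp (-(A * C * σ2 / (z * P1)) - σ2 * z / P2))
      = fun z => rexp (-(l1*(A*C)/z) - l2*z) := by
    funext z
    rw [hl1def, hl2def]
    congr 1
    ring
  rw [hintg]
  have e3 : rexp (-(l1*(A-1)) - l2*(C-1)) = rexp (-l1*(A-1)) * rexp (-l2*(C-1)) := by
    rw [← Real.exp_add]; congr 1; ring
  have e1 : rexp (-(l1*(A-1))) = rexp (-l1*(A-1)) := by congr 1; ring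
  have e2 : rexp (-(l2*(A*C-1))) = rexp (-l2*(A*C-1)) := by congr 1; ring
  rw [e3, e1, e2]
  ring


end MainProof
end

section
/- (Theorem 1) Fix σ² > 0, R1, R2 > 0 and a, b > 0, and set P1 = a·t, P2 = b·t. Then as t → ∞, t²·[ φ(R1,R2) − e^{σ²/P1}·( e^{−(σ²/P2)(2^{R2}−1)} − e^{−(σ²/P2)(2^{R1+R2}−1)} ) + e^{σ²/P1 + σ²/P2}·(σ⁴/(P1·P2))·2^{R1+R2}·R1·ln 2 ] → 0; that is, φ(R1,R2) = e^{σ²/P1}( e^{−(σ²/P2)(2^{R2}−1)} − e^{−(σ²/P2)(2^{R1+R2}−1)} ) − e^{σ²/P1+σ²/P2}(σ⁴/(P1P2))·2^{R1+R2}·R1·ln 2 + o(σ⁴/(P1P2)). -/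
open MeasureTheory Real Filter

set_option maxHeartbeats 2000000

/-- **Theorem 1.** With `P₁ = a·t`, `P₂ = b·t`, as `t → ∞`,
`t²·[φ(R₁,R₂) − e^{σ²/P₁}(e^{−(σ²/P₂)(2^{R₂}−1)} − e^{−(σ²/P₂)(2^{R₁+R₂}−1)})
  + e^{σ²/P₁+σ²/P₂}·(σ⁴/(P₁P₂))·2^{R₁+R₂}·R₁·ln 2] → 0`,
i.e. the stated asymptotic expansion of `φ` holds up to `o(σ⁴/(P₁P₂))`. -/
theorem phi_asymptotic
    (σ2 R1 R2 a b : ℝ) (hσ : 0 < σ2) (hR1 : 0 < R1) (hR2 : 0 < R2)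
    (ha : 0 < a) (hb : 0 < b) :
    Filter.Tendsto
      (fun t : ℝ =>
        t ^ 2 *
          (phiXP σ2 (a * t) (b * t) R1 R2
            - Real.exp (σ2 / (a * t)) *
                (Real.exp (-(σ2 / (b * t)) * ((2:ℝ) ^ R2 - 1))
                  - Real.exp (-(σ2 / (b * t)) * ((2:ℝ) ^ (R1 + R2) - 1)))
            + Real.exp (σ2 / (a * t) + σ2 / (b * t))
                * (σ2 ^ 2 / ((a * t) * (b * t)))
                * (2:ℝ) ^ (R1 + R2) * R1 * Real.log 2))
      Filter.atTop (nhds 0) := by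
  set A : ℝ := (2:ℝ) ^ R2 with hAdef
  set B : ℝ := (2:ℝ) ^ (R1 + R2) with hBdef
  have hApos : 0 < A := Real.rpow_pos_of_pos two_pos _
  have hBpos : 0 < B := Real.rpow_pos_of_pos two_pos _
  have hAB : A ≤ B := by
    apply Real.rpow_le_rpow_of_exponent_le one_le_two (by linarith)
  clear_value A B
  set C : ℝ := Real.exp (σ2 / a + σ2 / b) * (B - A) *
      ((B / A) ^ 2 * σ2 ^ 3 / (a ^ 2 * b) + B * σ2 ^ 3 / (a * b ^ 2)) with hCdef
  refine squeeze_zero_norm' (a := fun t : ℝ => C / t) ?_ ?_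
  · filter_upwards [eventually_ge_atTop (1 : ℝ),
      eventually_ge_atTop (B * σ2 / (A * a))] with t ht1 ht2
    have htpos : (0:ℝ) < t := lt_of_lt_of_le one_pos ht1
    set u : ℝ := σ2 / (a * t) with hudef
    set v : ℝ := σ2 / (b * t) with hvdef
    have hupos : 0 < u := div_pos hσ (by positivity)
    have hvpos : 0 < v := div_pos hσ (by positivity)
    clear_value u v
    -- smallness of B*u/A
    have hsmall : B * u / A ≤ 1 := by
      rw [div_le_one hApos, hudef]
      rw [div_le_iff₀ (by positivity : (0:ℝ) < A * a)] at ht2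
      rw [show B * (σ2 / (a * t)) = B * σ2 / (a * t) from by ring,
        div_le_iff₀ (by positivity)]
      nlinarith
    -- the interval and nonvanishing
    have hzne : ∀ z ∈ Set.uIcc A B, z ≠ 0 := by
      intro z hz
      rw [Set.uIcc_of_le hAB] at hz
      exact ne_of_gt (lt_of_lt_of_le hApos hz.1)
    have hzpos : ∀ z ∈ Set.uIoc A B, A ≤ z ∧ z ≤ B := by
      intro z hz
      rw [Set.uIoc_of_le hAB] at hz
      exact ⟨le_of_lt hz.1, hz.2⟩
    -- integrability
    have hi1 : IntervalIntegrable (fun z => Real.exp (-(B * u / z) - v * z))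
        volume A B := by
      apply ContinuousOn.intervalIntegrable
      apply Real.continuous_exp.comp_continuousOn
      exact ((continuousOn_const.div continuousOn_id hzne).neg).sub
        (continuousOn_const.mul continuousOn_id)
    have hi2 : IntervalIntegrable (fun z => Real.exp (-v * z)) volume A B :=
      (Real.continuous_exp.comp (continuous_const.mul continuous_id)).intervalIntegrable _ _
    have hi3 : IntervalIntegrable (fun z => Real.exp (-v * z) / z) volume A B := by
      apply ContinuousOn.intervalIntegrable
      exact ((Real.continuous_exp.comp
        (continuous_const.mul continuous_id)).continuousOn).div continuousOn_id hzne
    have hi4 : IntervalIntegrable (fun z : ℝ => 1 / z) volume A B := by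
      apply ContinuousOn.intervalIntegrable
      exact continuousOn_const.div continuousOn_id hzne
    -- value of I2
    have hI2 : (∫ z in A..B, Real.exp (-v * z))
        = (Real.exp (-v * A) - Real.exp (-v * B)) / v := by
      have hd : ∀ z ∈ Set.uIcc A B,
          HasDerivAt (fun z => -Real.exp (-v * z) / v) (Real.exp (-v * z)) z := by
        intro z _
        have h1 : HasDerivAt (fun z : ℝ => -v * z) (-v) z := by
          simpa using (hasDerivAt_id z).const_mul (-v)
        have h2 : HasDerivAt (fun z : ℝ => Real.exp (-v * z))
            (Real.exp (-v * z) * (-v)) z := (Real.hasDerivAt_exp _).comp z h1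
        have h3 := (h2.div_const v).neg
        have hvne : v ≠ 0 := ne_of_gt hvpos
        have h4 : (fun z => -Real.exp (-v * z) / v) = -fun x => Real.exp (-v * x) / v := by
          funext x; simp [neg_div]
        rw [h4]
        exact h3.congr_deriv (by rw [mul_neg, neg_div, neg_neg, mul_div_assoc, div_self hvne, mul_one])
      rw [intervalIntegral.integral_eq_sub_of_hasDerivAt hd hi2]
      field_simp
      ring
    -- value of I4
    have hI4 : (∫ z in A..B, 1 / z) = R1 * Real.log 2 := by
      rw [integral_one_div]
      · have : B / A = (2:ℝ) ^ R1 := by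
          rw [hAdef, hBdef, ← Real.rpow_sub two_pos]
          norm_num
        rw [this, Real.log_rpow two_pos]
      · rw [Set.uIcc_of_le hAB]
        intro h
        exact absurd h.1 (by linarith)
    -- J : second-order remainder
    have hJ : |(∫ z in A..B, Real.exp (-(B * u / z) - v * z))
        - (∫ z in A..B, Real.exp (-v * z))
        + B * u * ∫ z in A..B, Real.exp (-v * z) / z|
        ≤ (B * u / A) ^ 2 * |B - A| := by
      have heq : (∫ z in A..B, Real.exp (-(B * u / z) - v * z))
          - (∫ z in A..B, Real.exp (-v * z))
          + B * u * ∫ z in A..B, Real.exp (-v * z) / z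
          = ∫ z in A..B, (Real.exp (-(B * u / z) - v * z)
              - Real.exp (-v * z) + B * u * (Real.exp (-v * z) / z)) := by
        rw [intervalIntegral.integral_add (hi1.sub hi2) (hi3.const_mul _),
          intervalIntegral.integral_sub hi1 hi2,
          intervalIntegral.integral_const_mul]
      rw [heq]
      have := intervalIntegral.norm_integral_le_of_norm_le_const
        (C := (B * u / A) ^ 2)
        (f := fun z => Real.exp (-(B * u / z) - v * z)
          - Real.exp (-v * z) + B * u * (Real.exp (-v * z) / z)) (a := A) (b := B) ?_
      · simpa [Real.norm_eq_abs] using this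
      intro z hz
      show ‖Real.exp (-(B * u / z) - v * z)
          - Real.exp (-v * z) + B * u * (Real.exp (-v * z) / z)‖ ≤ (B * u / A) ^ 2
      obtain ⟨hzA, hzB⟩ := hzpos z hz
      have hz0 : 0 < z := lt_of_lt_of_le hApos hzA
      have hx1 : |(-(B * u / z))| ≤ 1 := by
        rw [abs_neg, abs_of_nonneg (by positivity)]
        calc B * u / z ≤ B * u / A := by gcongr
          _ ≤ 1 := hsmall
      have hb1 := Real.abs_exp_sub_one_sub_id_le hx1
      have hfact : Real.exp (-(B * u / z) - v * z)
          - Real.exp (-v * z) + B * u * (Real.exp (-v * z) / z)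
          = (Real.exp (-(B * u / z)) - 1 - (-(B * u / z))) * Real.exp (-v * z) := by
        rw [sub_eq_add_neg (-(B * u / z)), Real.exp_add]
        ring
      rw [Real.norm_eq_abs, hfact, abs_mul, Real.abs_exp]
      calc |Real.exp (-(B * u / z)) - 1 - -(B * u / z)| * Real.exp (-v * z)
          ≤ (-(B * u / z)) ^ 2 * 1 := by
            apply mul_le_mul hb1 (Real.exp_le_one_iff.2 (by nlinarith)) (by positivity)
              (by positivity)
        _ = (B * u / z) ^ 2 := by ring
        _ ≤ (B * u / A) ^ 2 := by gcongr
    -- K : first-order log remainder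
    have hK : |R1 * Real.log 2 - ∫ z in A..B, Real.exp (-v * z) / z|
        ≤ v * |B - A| := by
      rw [← hI4, ← intervalIntegral.integral_sub hi4 hi3]
      have := intervalIntegral.norm_integral_le_of_norm_le_const (C := v)
        (f := fun z => 1 / z - Real.exp (-v * z) / z) (a := A) (b := B) ?_
      · simpa [Real.norm_eq_abs] using this
      intro z hz
      show ‖1 / z - Real.exp (-v * z) / z‖ ≤ v
      obtain ⟨hzA, hzB⟩ := hzpos z hz
      have hz0 : 0 < z := lt_of_lt_of_le hApos hzA
      have he1 : Real.exp (-v * z) ≤ 1 := Real.exp_le_one_iff.2 (by nlinarith)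
      have he2 : 1 - v * z ≤ Real.exp (-v * z) := by
        have := Real.add_one_le_exp (-v * z); linarith
      rw [Real.norm_eq_abs, div_sub_div_same, abs_div,
        abs_of_nonneg (by linarith : (0:ℝ) ≤ 1 - Real.exp (-v * z)),
        abs_of_pos hz0, div_le_iff₀ hz0]
      nlinarith
    -- the core algebraic identity
    have hphi : phiXP σ2 (a * t) (b * t) R1 R2
        = v * Real.exp (u + v) * ∫ z in A..B, Real.exp (-(B * u / z) - v * z) := by
      have hint : (fun z => Real.exp (-(B * σ2 / (z * (a * t))) - σ2 * z / (b * t)))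
          = (fun z => Real.exp (-(B * u / z) - v * z)) := by
        funext z
        rw [hudef, hvdef]
        congr 1
        ring
      rw [phiXP, ← hAdef, ← hBdef, ← hudef, ← hvdef, hint]
    have hvne : v ≠ 0 := ne_of_gt hvpos
    have hlead : Real.exp u * (Real.exp (-v * (A - 1)) - Real.exp (-v * (B - 1)))
        = v * Real.exp (u + v) * ∫ z in A..B, Real.exp (-v * z) := by
      have e1 : ∀ w : ℝ, Real.exp u * Real.exp (-v * (w - 1))
          = Real.exp (u + v) * Real.exp (-v * w) := by
        intro w
        rw [← Real.exp_add, ← Real.exp_add]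
        congr 1
        ring
      rw [hI2, mul_sub, e1 A, e1 B, eq_comm]
      field_simp
    have hcorr : Real.exp (u + v)
          * (σ2 ^ 2 / ((a * t) * (b * t))) * B * R1 * Real.log 2
        = Real.exp (u + v) * (u * v * B * (R1 * Real.log 2)) := by
      rw [hudef, hvdef]
      ring
    have hmain : t ^ 2 *
          (phiXP σ2 (a * t) (b * t) R1 R2
            - Real.exp u *
                (Real.exp (-v * (A - 1))
                  - Real.exp (-v * (B - 1)))
            + Real.exp (u + v)
                * (σ2 ^ 2 / ((a * t) * (b * t))) * B * R1 * Real.log 2)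
        = t ^ 2 * Real.exp (u + v) * v *
            (((∫ z in A..B, Real.exp (-(B * u / z) - v * z))
              - (∫ z in A..B, Real.exp (-v * z))
              + B * u * ∫ z in A..B, Real.exp (-v * z) / z)
            + B * u * (R1 * Real.log 2 - ∫ z in A..B, Real.exp (-v * z) / z)) := by
      rw [hphi, hlead, hcorr]
      ring
    rw [Real.norm_eq_abs, hmain]
    have habs : |t ^ 2 * Real.exp (u + v) * v *
            (((∫ z in A..B, Real.exp (-(B * u / z) - v * z))
              - (∫ z in A..B, Real.exp (-v * z))
              + B * u * ∫ z in A..B, Real.exp (-v * z) / z)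
            + B * u * (R1 * Real.log 2 - ∫ z in A..B, Real.exp (-v * z) / z))|
        ≤ t ^ 2 * Real.exp (u + v) * v *
            ((B * u / A) ^ 2 * |B - A| + B * u * (v * |B - A|)) := by
      rw [abs_mul]
      have h1 : |t ^ 2 * Real.exp (u + v) * v| = t ^ 2 * Real.exp (u + v) * v := by
        rw [abs_of_pos (by positivity)]
      rw [h1]
      apply mul_le_mul_of_nonneg_left _ (by positivity)
      calc |_ + B * u * (R1 * Real.log 2 - ∫ z in A..B, Real.exp (-v * z) / z)|
          ≤ |(∫ z in A..B, Real.exp (-(B * u / z) - v * z))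
              - (∫ z in A..B, Real.exp (-v * z))
              + B * u * ∫ z in A..B, Real.exp (-v * z) / z|
            + |B * u * (R1 * Real.log 2 - ∫ z in A..B, Real.exp (-v * z) / z)| :=
            abs_add_le _ _
        _ ≤ (B * u / A) ^ 2 * |B - A| + B * u * (v * |B - A|) := by
            apply add_le_add hJ
            rw [abs_mul, abs_of_pos (by positivity)]
            exact mul_le_mul_of_nonneg_left hK (by positivity)
    refine le_trans habs ?_
    -- now derive the explicit C/t bound
    have hBA : |B - A| = B - A := abs_of_nonneg (by linarith)
    have hexp : Real.exp (u + v) ≤ Real.exp (σ2 / a + σ2 / b) := by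
      apply Real.exp_le_exp.2
      rw [hudef, hvdef]
      apply add_le_add
      · apply div_le_div_of_nonneg_left (le_of_lt hσ) (by positivity)
        nlinarith
      · apply div_le_div_of_nonneg_left (le_of_lt hσ) (by positivity)
        nlinarith
    have hrw : t ^ 2 * Real.exp (u + v) * v *
            ((B * u / A) ^ 2 * |B - A| + B * u * (v * |B - A|))
        = Real.exp (u + v) * (B - A) *
            ((B / A) ^ 2 * σ2 ^ 3 / (a ^ 2 * b) + B * σ2 ^ 3 / (a * b ^ 2)) / t := by
      rw [hBA, hudef, hvdef]
      field_simp
    rw [hrw, hCdef]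
    apply div_le_div_of_nonneg_right _ htpos.le
    apply mul_le_mul_of_nonneg_right _ (by positivity)
    exact mul_le_mul_of_nonneg_right hexp (by linarith)
  · have : Filter.Tendsto (fun t : ℝ => C * t⁻¹) Filter.atTop (nhds 0) := by
      simpa using tendsto_inv_atTop_zero.const_mul C
    simpa [div_eq_mul_inv] using this
end

section
/- With x_0 = 1, the XP-HARQ outage probability admits the iterated-integral representation P_out,K = ∏_{k=1}^K (σ²/P_k)·e^{σ²/P_k} · ∫_{x_0}^{2^{R_1^Σ}} ⋯ ∫_{x_{K−2}}^{2^{R_{K−1}^Σ}} ∫_{x_{K−1}}^{2^{R_K^Σ}} exp(−(σ²/P_K)·x_K/x_{K−1}) · ∏_{k=1}^{K−1} (1/x_k)·exp(−(σ²/P_k)·x_k/x_{k−1}) dx_K dx_{K−1} ⋯ dx_1, i.e., the probability that the nested conditions x_{k−1} < x_k < 2^{R_k^Σ} hold for x_k = ∏_{l=1}^k (1+γ_l) equals this nested integral of the transformed joint density. -/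
open MeasureTheory ProbabilityTheory Real Filter

open scoped ENNReal

/-- The nested iterated integral appearing in the representation of `P_out,K`:
`nestedInt σ2 P RΣ K j` is the function `x_{K-j-1} ↦ F_{K-j}(x_{K-j-1})` where
`F_K(y) = ∫_y^{2^{RΣ K}} exp(−(σ²/P_K)·z/y) dz` and, for `1 ≤ k ≤ K−1`,
`F_k(y) = ∫_y^{2^{RΣ k}} (1/z)·exp(−(σ²/P_k)·z/y)·F_{k+1}(z) dz`. -/
noncomputable def nestedInt (σ2 : ℝ) (P Rs : ℕ → ℝ) (K : ℕ) : ℕ → ℝ → ℝ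
  | 0, y => ∫ z in y..((2:ℝ) ^ Rs K), Real.exp (-(σ2 / P K) * z / y)
  | (j + 1), y =>
      ∫ z in y..((2:ℝ) ^ Rs (K - (j + 1))),
        (1 / z) * Real.exp (-(σ2 / P (K - (j + 1))) * z / y)
          * nestedInt σ2 P Rs K j z

/-- Auxiliary reformulation of the nested integral, by recursion on the number of
remaining stages, with the rate and threshold sequences shifted at each step. -/
noncomputable def auxInt : ℕ → (ℕ → ℝ) → (ℕ → ℝ) → ℝ → ℝ
  | 0, L, T, y => ∫ z in y..T 0, Real.exp (-L 0 * z / y)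
  | (n + 1), L, T, y =>
      ∫ z in y..T 0,
        (1 / z) * Real.exp (-L 0 * z / y)
          * auxInt n (fun i => L (i + 1)) (fun i => T (i + 1)) z

lemma nestedInt_eq_auxInt (σ2 : ℝ) (P Rs : ℕ → ℝ) (K : ℕ) :
    ∀ j, j < K → nestedInt σ2 P Rs K j
      = auxInt j (fun i => σ2 / P (K - j + i)) (fun i => (2:ℝ) ^ Rs (K - j + i)) := by
  intro j
  induction j with
  | zero =>
    intro _
    funext y
    simp only [nestedInt, auxInt, Nat.sub_zero, Nat.add_zero]
  | succ j ih =>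
    intro h
    funext y
    have h1 : (fun i => σ2 / P (K - (j + 1) + (i + 1))) = fun i => σ2 / P (K - j + i) := by
      funext i
      have : K - (j + 1) + (i + 1) = K - j + i := by omega
      rw [this]
    have h2 : (fun i => (2:ℝ) ^ Rs (K - (j + 1) + (i + 1))) = fun i => (2:ℝ) ^ Rs (K - j + i) := by
      funext i
      have : K - (j + 1) + (i + 1) = K - j + i := by omega
      rw [this]
    simp only [nestedInt, auxInt, Nat.add_zero, h1, h2, ih (by omega)]

/-- The set of trajectories staying (multiplicatively) below the thresholds. -/
def boxSet (n : ℕ) (T : ℕ → ℝ) (y : ℝ) : Set (Fin n → ℝ) :=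
  {v | ∀ m : Fin n, y * ∏ i ∈ Finset.Iic m, (1 + v i) < T m.1}

lemma measurableSet_boxSetProd (n : ℕ) (T : ℕ → ℝ) :
    MeasurableSet {p : ℝ × (Fin n → ℝ) |
      ∀ m : Fin n, p.1 * ∏ i ∈ Finset.Iic m, (1 + p.2 i) < T m.1} := by
  rw [Set.setOf_forall]
  refine MeasurableSet.iInter fun m => ?_
  exact measurableSet_lt (measurable_fst.mul <| Finset.measurable_prod _ fun i _ =>
    measurable_const.add ((measurable_pi_apply i).comp measurable_snd)) measurable_const

lemma measurableSet_boxSet (n : ℕ) (T : ℕ → ℝ) (y : ℝ) : MeasurableSet (boxSet n T y) :=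
  measurable_prodMk_left (measurableSet_boxSetProd n T)

lemma prod_Iic_succ {M : Type*} [CommMonoid M] {n : ℕ} (f : Fin (n + 1) → M) (m : Fin n) :
    ∏ i ∈ Finset.Iic m.succ, f i = f 0 * ∏ i ∈ Finset.Iic m, f i.succ := by
  have h : Finset.Iic m.succ
      = insert (0 : Fin (n + 1)) ((Finset.Iic m).map ⟨Fin.succ, Fin.succ_injective n⟩) := by
    ext i
    simp only [Finset.mem_Iic, Finset.mem_insert, Finset.mem_map, Function.Embedding.coeFn_mk]
    constructor
    · intro hi
      rcases Fin.eq_zero_or_eq_succ i with h0 | ⟨j, rfl⟩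
      · exact Or.inl h0
      · exact Or.inr ⟨j, Fin.succ_le_succ_iff.mp hi, rfl⟩
    · rintro (rfl | ⟨j, hj, rfl⟩)
      · exact Fin.zero_le _
      · exact Fin.succ_le_succ_iff.mpr hj
  rw [h, Finset.prod_insert (by simp [Fin.succ_ne_zero]), Finset.prod_map]
  rfl

lemma prod_Iic_val {K : ℕ} (m : Fin K) (g : ℕ → ℝ) :
    ∏ i ∈ Finset.Iic m, g (i.1 + 1) = ∏ l ∈ Finset.Icc 1 (m.1 + 1), g l := by
  have hK : 0 < K := m.pos
  refine Finset.prod_nbij' (fun a => a.1 + 1) (fun b => ⟨(b - 1) % K, Nat.mod_lt _ hK⟩)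
    ?_ ?_ ?_ ?_ ?_
  · intro a ha
    rw [Finset.mem_Iic, Fin.le_def] at ha
    rw [Finset.mem_Icc]
    show 1 ≤ a.1 + 1 ∧ a.1 + 1 ≤ m.1 + 1
    omega
  · intro b hb
    rw [Finset.mem_Icc] at hb
    rw [Finset.mem_Iic, Fin.le_def]
    have hm := m.isLt
    show (b - 1) % K ≤ m.1
    have hmod : (b - 1) % K = b - 1 := Nat.mod_eq_of_lt (by omega)
    omega
  · intro a ha
    rw [Finset.mem_Iic, Fin.le_def] at ha
    have hm := m.isLt
    apply Fin.ext
    show (a.1 + 1 - 1) % K = a.1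
    have h1 : a.1 + 1 - 1 = a.1 := by omega
    rw [h1, Nat.mod_eq_of_lt a.isLt]
  · intro b hb
    rw [Finset.mem_Icc] at hb
    have hm := m.isLt
    show (b - 1) % K + 1 = b
    have hmod : (b - 1) % K = b - 1 := Nat.mod_eq_of_lt (by omega)
    omega
  · intro a _
    rfl

lemma expMeasure_Iic_zero (r : ℝ) : expMeasure r (Set.Iic 0) = 0 := by
  have h : expMeasure r (Set.Iic 0) = ∫⁻ x in Set.Iic (0:ℝ), exponentialPDF r x :=
    withDensity_apply _ measurableSet_Iic
  rw [h, setLIntegral_congr (Filter.EventuallyEq.symm Iio_ae_eq_Iic)]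
  exact lintegral_exponentialPDF_of_nonpos le_rfl

lemma expMeasure_lintegral (r Tm : ℝ) (hr : 0 < r) (hTm : 0 ≤ Tm) (g : ℝ → ℝ≥0∞)
    (hg : Measurable g) (hg1 : ∀ x, g x ≤ 1) :
    (∫⁻ x in Set.Iio Tm, g x ∂(expMeasure r)).toReal
      = r * ∫ x in (0:ℝ)..Tm, Real.exp (-(r * x)) * (g x).toReal := by
  have hexp : expMeasure r = volume.withDensity (exponentialPDF r) := rfl
  have hmeas_pdf : Measurable (exponentialPDF r) :=
    (measurable_exponentialPDFReal r).ennreal_ofReal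
  have key : ∫⁻ x in Set.Iio Tm, g x ∂(expMeasure r)
      = ENNReal.ofReal r * ∫⁻ x in Set.Ioc (0:ℝ) Tm,
          ENNReal.ofReal (Real.exp (-(r * x))) * g x := by
    rw [hexp, restrict_withDensity measurableSet_Iio,
      lintegral_withDensity_eq_lintegral_mul _ hmeas_pdf hg]
    have hsplit : Set.Iio Tm = Set.Iio (0:ℝ) ∪ Set.Ico 0 Tm := by
      ext x
      simp only [Set.mem_Iio, Set.mem_union, Set.mem_Ico]
      constructor
      · intro hx
        rcases lt_or_ge x 0 with h0 | h0
        · exact Or.inl h0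
        · exact Or.inr ⟨h0, hx⟩
      · rintro (hx | ⟨_, hx⟩)
        · exact lt_of_lt_of_le hx hTm
        · exact hx
    have hdisj : Disjoint (Set.Iio (0:ℝ)) (Set.Ico 0 Tm) :=
      Set.disjoint_left.mpr fun x hx hx' => absurd hx'.1 (not_le.mpr hx)
    rw [hsplit, lintegral_union measurableSet_Ico hdisj]
    have hzero : ∫⁻ x in Set.Iio (0:ℝ), (exponentialPDF r * g) x = 0 := by
      have h0 : ∀ x ∈ Set.Iio (0:ℝ), (exponentialPDF r * g) x = (fun _ => (0:ℝ≥0∞)) x :=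
        fun x hx => by simp [Pi.mul_apply, exponentialPDF_of_neg hx]
      rw [setLIntegral_congr_fun measurableSet_Iio (fun x hx => h0 x hx), lintegral_zero]
    rw [hzero, zero_add, setLIntegral_congr Ico_ae_eq_Ioc]
    rw [setLIntegral_congr_fun measurableSet_Ioc
      (fun x (hx : x ∈ Set.Ioc (0:ℝ) Tm) => by
        show (exponentialPDF r * g) x
          = ENNReal.ofReal r * (ENNReal.ofReal (Real.exp (-(r * x))) * g x)
        rw [Pi.mul_apply, exponentialPDF_of_nonneg hx.1.le, ENNReal.ofReal_mul hr.le, mul_assoc])]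
    have hfm : Measurable fun x : ℝ => ENNReal.ofReal (Real.exp (-(r * x))) * g x := by
      refine Measurable.mul ?_ hg
      refine Measurable.ennreal_ofReal ?_
      exact ((measurable_id.const_mul r).neg).exp
    rw [lintegral_const_mul _ hfm]
  rw [key, ENNReal.toReal_mul, ENNReal.toReal_ofReal hr.le]
  congr 1
  rw [intervalIntegral.integral_of_le hTm,
    integral_eq_lintegral_of_nonneg_ae
      (ae_of_all _ fun x => mul_nonneg (Real.exp_nonneg _) ENNReal.toReal_nonneg)
      (by
        have hm2 : Measurable fun x : ℝ => Real.exp (-(r * x)) * (g x).toReal := by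
          refine Measurable.mul ?_ hg.ennreal_toReal
          exact ((measurable_id.const_mul r).neg).exp
        exact hm2.aestronglyMeasurable)]
  congr 1
  refine setLIntegral_congr_fun measurableSet_Ioc (fun x _ => ?_)
  rw [ENNReal.ofReal_mul (Real.exp_nonneg _),
    ENNReal.ofReal_toReal (lt_of_le_of_lt (hg1 x) ENNReal.one_lt_top).ne]

lemma subst_interval (f : ℝ → ℝ) {y : ℝ} (T0 : ℝ) (hy : y ≠ 0) :
    y * ∫ x in (0:ℝ)..(T0 / y - 1), f (y * (1 + x)) = ∫ z in y..T0, f z := by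
  have h1 : (fun x => f (y * (1 + x))) = fun x => f ((x + 1) * y) := by
    funext x
    congr 1
    ring
  rw [h1, intervalIntegral.integral_comp_add_right (fun t => f (t * y)) 1,
    intervalIntegral.integral_comp_mul_right f hy, smul_eq_mul, ← mul_assoc,
    mul_inv_cancel₀ hy, one_mul]
  have e1 : ((0:ℝ) + 1) * y = y := by ring
  have e2 : (T0 / y - 1 + 1) * y = T0 := by field_simp; ring
  rw [e1, e2]

lemma main_lemma (n : ℕ) : ∀ (L T : ℕ → ℝ), (∀ i, i ≤ n → 0 < L i) →
    (∀ i, i < n → T i ≤ T (i + 1)) → ∀ y : ℝ, 0 < y → y ≤ T 0 →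
    auxInt n L T y
      = (∏ i ∈ Finset.range (n + 1), (L i)⁻¹ * Real.exp (-L i)) *
        (y * ((Measure.pi fun i : Fin (n + 1) => expMeasure (L i.1))
            (boxSet (n + 1) T y)).toReal) := by
  induction n with
  | zero =>
    intro L T hL _ y hy hyT
    haveI : IsProbabilityMeasure (expMeasure (L 0)) :=
      isProbabilityMeasure_expMeasure (hL 0 le_rfl)
    have hL0 := hL 0 le_rfl
    have hTm : (0:ℝ) ≤ T 0 / y - 1 := by
      rw [sub_nonneg, le_div_iff₀ hy]
      linarith
    have hIio : ∀ x : ℝ, y * (1 + x) < T 0 ↔ x < T 0 / y - 1 := by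
      intro x
      rw [mul_comm, ← lt_div_iff₀ hy]
      constructor <;> intro h <;> linarith
    have hexp : ∀ x : ℝ, Real.exp (-L 0 * (y * (1 + x)) / y)
        = Real.exp (-L 0) * Real.exp (-(L 0 * x)) := by
      intro x
      rw [← Real.exp_add]
      congr 1
      field_simp
      ring
    have hIic0 : (Finset.Iic (0 : Fin 1)) = {0} := by
      ext i
      simp [Fin.le_zero_iff, Subsingleton.elim i (0 : Fin 1)]
    -- measure side
    have hmp := measurePreserving_piUnique (fun i : Fin 1 => expMeasure (L i.1))
    have hbox : boxSet 1 T y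
        = (MeasurableEquiv.piUnique (fun _ : Fin 1 => ℝ)) ⁻¹' (Set.Iio (T 0 / y - 1)) := by
      ext v
      constructor
      · intro hv
        have h0 := hv 0
        rw [hIic0, Finset.prod_singleton] at h0
        show (MeasurableEquiv.piUnique (fun _ : Fin 1 => ℝ)) v ∈ Set.Iio (T 0 / y - 1)
        have hve : (MeasurableEquiv.piUnique (fun _ : Fin 1 => ℝ)) v = v 0 := rfl
        rw [hve, Set.mem_Iio]
        exact (hIio (v 0)).mp h0
      · intro hv m
        have hm0 : m = 0 := Subsingleton.elim m 0
        subst hm0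
        rw [hIic0, Finset.prod_singleton]
        have hve : (MeasurableEquiv.piUnique (fun _ : Fin 1 => ℝ)) v = v 0 := rfl
        rw [Set.mem_preimage, hve, Set.mem_Iio] at hv
        exact (hIio (v 0)).mpr hv
    have hmeasure : (Measure.pi fun i : Fin 1 => expMeasure (L i.1)) (boxSet 1 T y)
        = expMeasure (L 0) (Set.Iio (T 0 / y - 1)) := by
      rw [hbox]
      exact hmp.measure_preimage measurableSet_Iio.nullMeasurableSet
    have honeint : (expMeasure (L 0) (Set.Iio (T 0 / y - 1))).toReal
        = L 0 * ∫ x in (0:ℝ)..(T 0 / y - 1), Real.exp (-(L 0 * x)) := by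
      rw [← setLIntegral_one, expMeasure_lintegral (L 0) _ hL0 hTm
        (fun _ => 1) measurable_const (fun _ => le_rfl)]
      simp
    show (∫ z in y..T 0, Real.exp (-L 0 * z / y)) = _
    rw [← subst_interval (fun z => Real.exp (-L 0 * z / y)) (T 0) hy.ne']
    simp only [hexp]
    rw [intervalIntegral.integral_const_mul, hmeasure, honeint, Finset.prod_range_one]
    field_simp [hL0.ne']
  | succ n ih =>
    intro L T hL hT y hy hyT
    have hL0 := hL 0 (by omega)
    haveI hprob : ∀ i : Fin (n + 1), IsProbabilityMeasure (expMeasure (L (i.1 + 1))) :=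
      fun i => isProbabilityMeasure_expMeasure (hL (i.1 + 1) (by omega))
    haveI hprob2 : ∀ i : Fin (n + 1 + 1), IsProbabilityMeasure (expMeasure (L i.1)) :=
      fun i => isProbabilityMeasure_expMeasure (hL i.1 (by omega))
    set π' : Measure (Fin (n + 1) → ℝ) :=
      Measure.pi fun i : Fin (n + 1) => expMeasure (L (i.1 + 1)) with hπ'
    haveI : IsProbabilityMeasure π' := by
      rw [hπ']
      infer_instance
    have hTm : (0:ℝ) ≤ T 0 / y - 1 := by
      rw [sub_nonneg, le_div_iff₀ hy]
      linarith
    have hIio : ∀ x : ℝ, y * (1 + x) < T 0 ↔ x < T 0 / y - 1 := by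
      intro x
      rw [mul_comm, ← lt_div_iff₀ hy]
      constructor <;> intro h <;> linarith
    have hexp : ∀ x : ℝ, Real.exp (-L 0 * (y * (1 + x)) / y)
        = Real.exp (-L 0) * Real.exp (-(L 0 * x)) := by
      intro x
      rw [← Real.exp_add]
      congr 1
      field_simp
      ring
    have hL' : ∀ i, i ≤ n → 0 < L (i + 1) := fun i hi => hL (i + 1) (by omega)
    have hT' : ∀ i, i < n → T (i + 1) ≤ T (i + 1 + 1) := fun i hi => hT (i + 1) (by omega)
    set Ψ : ℝ → ℝ := fun c => (π' (boxSet (n + 1) (fun i => T (i + 1)) c)).toReal with hΨ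
    -- Step 1: rewrite the integrand using the induction hypothesis
    have e2 : auxInt (n + 1) L T y
        = ∫ z in y..T 0,
            (∏ i ∈ Finset.range (n + 1), (L (i + 1))⁻¹ * Real.exp (-L (i + 1)))
              * (Real.exp (-L 0 * z / y) * Ψ z) := by
      simp only [auxInt]
      refine intervalIntegral.integral_congr ?_
      intro z hz
      rw [Set.uIcc_of_le hyT] at hz
      have hz0 : 0 < z := lt_of_lt_of_le hy hz.1
      dsimp only
      rw [ih (fun i => L (i + 1)) (fun i => T (i + 1)) hL' hT' z hz0
        (le_trans hz.2 (hT 0 (by omega)))]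
      simp only [hΨ, hπ']
      have key : ∀ C E X : ℝ, 1 / z * E * (C * (z * X)) = C * (E * X) := by
        intro C E X
        have h' : z⁻¹ * E * (C * (z * X)) = z⁻¹ * z * (C * (E * X)) := by ring
        rw [one_div, h', inv_mul_cancel₀ hz0.ne', one_mul]
      exact key _ _ _
    -- Step 2: the measure side
    set B : Set (ℝ × (Fin (n + 1) → ℝ)) :=
      {p | y * (1 + p.1) < T 0} ∩
      {p | ∀ m : Fin (n + 1),
        (y * (1 + p.1)) * ∏ i ∈ Finset.Iic m, (1 + p.2 i) < T (m.1 + 1)} with hBdef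
    have hB : MeasurableSet B := by
      refine MeasurableSet.inter ?_ ?_
      · exact measurableSet_lt (measurable_const.mul (measurable_const.add measurable_fst))
          measurable_const
      · rw [Set.setOf_forall]
        refine MeasurableSet.iInter fun m => ?_
        exact measurableSet_lt ((measurable_const.mul (measurable_const.add measurable_fst)).mul
          (Finset.measurable_prod _ fun i _ =>
            measurable_const.add ((measurable_pi_apply i).comp measurable_snd)))
          measurable_const
    have hmp := measurePreserving_piFinSuccAbove
      (fun i : Fin (n + 1 + 1) => expMeasure (L i.1)) 0
    have hfam : (fun j : Fin (n + 1) => expMeasure (L ((0 : Fin (n + 1 + 1)).succAbove j).1))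
        = fun j : Fin (n + 1) => expMeasure (L (j.1 + 1)) := by
      funext j
      rw [Fin.zero_succAbove, Fin.val_succ]
    rw [hfam] at hmp
    simp only [Fin.val_zero] at hmp
    set e := MeasurableEquiv.piFinSuccAbove (fun _ : Fin (n + 1 + 1) => ℝ) 0 with he
    have happ : ∀ f : Fin (n + 1 + 1) → ℝ, e f = (f 0, fun j : Fin (n + 1) => f j.succ) := by
      intro f
      rw [he]
      ext
      · rfl
      · simp [MeasurableEquiv.piFinSuccAbove, Fin.removeNth, Fin.zero_succAbove, Fin.tail]
    have hpre : ⇑e ⁻¹' B = boxSet (n + 1 + 1) T y := by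
      ext f
      rw [Set.mem_preimage, happ f]
      simp only [hBdef, Set.mem_inter_iff, Set.mem_setOf_eq, boxSet]
      constructor
      · rintro ⟨h0, hs⟩ m
        refine Fin.cases ?_ ?_ m
        · have hIic0 : (Finset.Iic (0 : Fin (n + 1 + 1))) = {0} := by
            ext i
            simp [Fin.le_zero_iff]
          rw [hIic0, Finset.prod_singleton]
          exact h0
        · intro m'
          rw [prod_Iic_succ (fun i => 1 + f i) m', ← mul_assoc]
          exact hs m'
      · intro h
        constructor
        · have h0 := h 0
          have hIic0 : (Finset.Iic (0 : Fin (n + 1 + 1))) = {0} := by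
            ext i
            simp [Fin.le_zero_iff]
          rw [hIic0, Finset.prod_singleton] at h0
          exact h0
        · intro m'
          have hm := h m'.succ
          rw [prod_Iic_succ (fun i => 1 + f i) m', ← mul_assoc] at hm
          exact hm
    have hsec : ∀ x : ℝ, π' (Prod.mk x ⁻¹' B)
        = Set.indicator (Set.Iio (T 0 / y - 1))
            (fun x => π' (boxSet (n + 1) (fun i => T (i + 1)) (y * (1 + x)))) x := by
      intro x
      by_cases hx : x ∈ Set.Iio (T 0 / y - 1)
      · rw [Set.indicator_of_mem hx]
        congr 1
        have hx' : y * (1 + x) < T 0 := (hIio x).mpr hx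
        ext w
        simp only [hBdef, Set.mem_preimage, Set.mem_inter_iff, Set.mem_setOf_eq, boxSet,
          hx', true_and]
      · rw [Set.indicator_of_notMem hx]
        have hempty : Prod.mk x ⁻¹' B = ∅ := by
          ext w
          simp only [hBdef, Set.mem_preimage, Set.mem_inter_iff, Set.mem_setOf_eq,
            Set.mem_empty_iff_false, iff_false, not_and]
          intro hc
          exact absurd ((hIio x).mp hc) hx
        rw [hempty, measure_empty]
    have hPP : (Measure.pi fun i : Fin (n + 1 + 1) => expMeasure (L i.1))
          (boxSet (n + 1 + 1) T y)
        = ∫⁻ x in Set.Iio (T 0 / y - 1),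
            π' (boxSet (n + 1) (fun i => T (i + 1)) (y * (1 + x))) ∂(expMeasure (L 0)) := by
      rw [← hpre, hmp.measure_preimage hB.nullMeasurableSet, Measure.prod_apply hB,
        lintegral_congr hsec, lintegral_indicator measurableSet_Iio _]
    have hgm : Measurable fun x : ℝ =>
        π' (boxSet (n + 1) (fun i => T (i + 1)) (y * (1 + x))) := by
      have h1 : Measurable fun c : ℝ => π' (boxSet (n + 1) (fun i => T (i + 1)) c) :=
        measurable_measure_prodMk_left (measurableSet_boxSetProd (n + 1) (fun i => T (i + 1)))
      exact h1.comp (measurable_const.mul (measurable_const.add measurable_id))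
    have hPP' : ((Measure.pi fun i : Fin (n + 1 + 1) => expMeasure (L i.1))
          (boxSet (n + 1 + 1) T y)).toReal
        = L 0 * ∫ x in (0:ℝ)..(T 0 / y - 1), Real.exp (-(L 0 * x)) * Ψ (y * (1 + x)) := by
      rw [hPP]
      exact expMeasure_lintegral (L 0) _ hL0 hTm
        (fun x => π' (boxSet (n + 1) (fun i => T (i + 1)) (y * (1 + x)))) hgm
        (fun x => prob_le_one)
    rw [e2, intervalIntegral.integral_const_mul,
      ← subst_interval (fun z => Real.exp (-L 0 * z / y) * Ψ z) (T 0) hy.ne']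
    simp only [hexp, mul_assoc]
    rw [intervalIntegral.integral_const_mul, hPP',
      Finset.prod_range_succ' (fun i => (L i)⁻¹ * Real.exp (-L i)) (n + 1)]
    have key2 : ∀ C Y E I : ℝ, C * ((L 0)⁻¹ * E) * (Y * (L 0 * I)) = C * (Y * (E * I)) := by
      intro C Y E I
      have h' : C * ((L 0)⁻¹ * E) * (Y * (L 0 * I)) = (L 0)⁻¹ * L 0 * (C * (Y * (E * I))) := by
        ring
      rw [h', inv_mul_cancel₀ hL0.ne', one_mul]
    exact (key2 _ _ _ _).symm

lemma eventually_all_mem_Icc {Ω : Type*} [MeasurableSpace Ω] (μ : Measure Ω) (a b : ℕ)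
    (p : ℕ → Ω → Prop) (h : ∀ l ∈ Finset.Icc a b, ∀ᵐ ω ∂μ, p l ω) :
    ∀ᵐ ω ∂μ, ∀ l ∈ Finset.Icc a b, p l ω := by
  have h' : ∀ᵐ ω ∂μ, ∀ l ∈ (↑(Finset.Icc a b) : Set ℕ), p l ω :=
    (ae_ball_iff (Finset.Icc a b).countable_toSet).mpr (fun l hl => h l hl)
  filter_upwards [h'] with ω hω l hl
  exact hω l hl

/-- With `x₀ = 1`, the XP-HARQ outage probability
`P_out,K = Pr(∀ k ∈ {1,…,K}, Σ_{l=1}^k log₂(1+γ_l) < R_k^Σ)` admits the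
iterated-integral representation
`P_out,K = ∏_{k=1}^K (σ²/P_k)·e^{σ²/P_k} ·
  ∫_{x₀}^{2^{R₁^Σ}} ⋯ ∫_{x_{K−2}}^{2^{R_{K−1}^Σ}} ∫_{x_{K−1}}^{2^{R_K^Σ}}
    e^{−(σ²/P_K)x_K/x_{K−1}} ∏_{k=1}^{K−1} (1/x_k)·e^{−(σ²/P_k)x_k/x_{k−1}}
    dx_K ⋯ dx_1`. -/
theorem outage_iterated_integral
    {Ω : Type*} [MeasurableSpace Ω] (μ : Measure Ω) [IsProbabilityMeasure μ]
    (K : ℕ) (hK : 2 ≤ K) (σ2 : ℝ) (hσ : 0 < σ2)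
    (P R : ℕ → ℝ) (hP : ∀ k ∈ Finset.Icc 1 K, 0 < P k)
    (hR : ∀ k ∈ Finset.Icc 1 K, 0 < R k)
    (γ : ℕ → Ω → ℝ) (hmeas : ∀ k ∈ Finset.Icc 1 K, Measurable (γ k))
    (hind : iIndepFun (fun i : Fin K => γ (i.1 + 1)) μ)
    (hdist : ∀ k ∈ Finset.Icc 1 K, Measure.map (γ k) μ = expMeasure (σ2 / P k)) :
    (μ {ω | ∀ k ∈ Finset.Icc 1 K,
        ∑ l ∈ Finset.Icc 1 k, Real.logb 2 (1 + γ l ω)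
          < ∑ l ∈ Finset.Icc 1 k, R l}).toReal
      = (∏ k ∈ Finset.Icc 1 K, (σ2 / P k) * Real.exp (σ2 / P k))
          * nestedInt σ2 P (fun m => ∑ l ∈ Finset.Icc 1 m, R l) K (K - 1) 1 := by
  obtain ⟨n, rfl⟩ : ∃ n, K = n + 2 := ⟨K - 2, by omega⟩
  set L : ℕ → ℝ := fun i => σ2 / P (i + 1) with hLdef
  set T : ℕ → ℝ := fun i => (2:ℝ) ^ (∑ l ∈ Finset.Icc 1 (i + 1), R l) with hTdef
  have hL : ∀ i, i ≤ n + 1 → 0 < L i := by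
    intro i hi
    exact div_pos hσ (hP (i + 1) (by rw [Finset.mem_Icc]; omega))
  have hT : ∀ i, i < n + 1 → T i ≤ T (i + 1) := by
    intro i hi
    show (2:ℝ) ^ (∑ l ∈ Finset.Icc 1 (i + 1), R l)
      ≤ (2:ℝ) ^ (∑ l ∈ Finset.Icc 1 (i + 1 + 1), R l)
    rw [Real.rpow_le_rpow_left_iff one_lt_two]
    refine Finset.sum_le_sum_of_subset_of_nonneg
      (Finset.Icc_subset_Icc le_rfl (by omega)) ?_
    intro l hl _
    rw [Finset.mem_Icc] at hl
    exact (hR l (by rw [Finset.mem_Icc]; omega)).le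
  have hy1 : (1:ℝ) ≤ T 0 := by
    show (1:ℝ) ≤ (2:ℝ) ^ (∑ l ∈ Finset.Icc 1 (0 + 1), R l)
    rw [show (1:ℝ) = (2:ℝ) ^ (0:ℝ) from (Real.rpow_zero 2).symm,
      Real.rpow_le_rpow_left_iff one_lt_two]
    refine Finset.sum_nonneg fun l hl => ?_
    rw [Finset.mem_Icc] at hl
    exact (hR l (by rw [Finset.mem_Icc]; omega)).le
  set Γ : Ω → (Fin (n + 2) → ℝ) := fun ω i => γ (i.1 + 1) ω with hΓdef
  have hΓmeas : Measurable Γ :=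
    measurable_pi_lambda _ fun i => hmeas (i.1 + 1) (by rw [Finset.mem_Icc]; omega)
  haveI hprobs : ∀ i : Fin (n + 2), IsProbabilityMeasure (expMeasure (L i.1)) :=
    fun i => isProbabilityMeasure_expMeasure (hL i.1 (by have := i.isLt; omega))
  -- a.e. positivity
  have h_pos_ae : ∀ᵐ ω ∂μ, ∀ l ∈ Finset.Icc 1 (n + 2), 0 < γ l ω := by
    refine eventually_all_mem_Icc μ 1 (n + 2) _ fun l hl => ?_
    have hnull : μ {ω | ¬ 0 < γ l ω} = 0 := by
      have hset : {ω | ¬ 0 < γ l ω} = γ l ⁻¹' (Set.Iic 0) := by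
        ext ω
        simp [not_lt]
      rw [hset, ← Measure.map_apply (hmeas l hl) measurableSet_Iic, hdist l hl,
        expMeasure_Iic_zero]
    exact hnull
  -- event identification
  have hsub : μ {ω | ∀ k ∈ Finset.Icc 1 (n + 2),
        ∑ l ∈ Finset.Icc 1 k, Real.logb 2 (1 + γ l ω)
          < ∑ l ∈ Finset.Icc 1 k, R l} = μ (Γ ⁻¹' boxSet (n + 2) T 1) := by
    refine measure_congr ?_
    filter_upwards [h_pos_ae] with ω hpos
    have hcond : ∀ k ∈ Finset.Icc 1 (n + 2),
        ((∑ l ∈ Finset.Icc 1 k, Real.logb 2 (1 + γ l ω) < ∑ l ∈ Finset.Icc 1 k, R l)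
          ↔ (∏ l ∈ Finset.Icc 1 k, (1 + γ l ω)
              < (2:ℝ) ^ (∑ l ∈ Finset.Icc 1 k, R l))) := by
      intro k hk
      rw [Finset.mem_Icc] at hk
      have hfl : ∀ l ∈ Finset.Icc 1 k, 0 < 1 + γ l ω := by
        intro l hl
        rw [Finset.mem_Icc] at hl
        have := hpos l (by rw [Finset.mem_Icc]; omega)
        linarith
      have hprodpos : 0 < ∏ l ∈ Finset.Icc 1 k, (1 + γ l ω) := Finset.prod_pos hfl
      have hlog : ∑ l ∈ Finset.Icc 1 k, Real.logb 2 (1 + γ l ω)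
          = Real.logb 2 (∏ l ∈ Finset.Icc 1 k, (1 + γ l ω)) := by
        simp only [Real.logb]
        rw [Real.log_prod (fun l hl => (hfl l hl).ne'), Finset.sum_div]
      rw [hlog]
      exact Real.logb_lt_iff_lt_rpow one_lt_two hprodpos
    have hiff : (∀ k ∈ Finset.Icc 1 (n + 2),
        ∑ l ∈ Finset.Icc 1 k, Real.logb 2 (1 + γ l ω)
          < ∑ l ∈ Finset.Icc 1 k, R l) ↔ (ω ∈ Γ ⁻¹' boxSet (n + 2) T 1) := by
      rw [Set.mem_preimage]
      constructor
      · intro h m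
        rw [one_mul, hΓdef]
        show (∏ i ∈ Finset.Iic m, (1 + γ (i.1 + 1) ω)) < T m.1
        rw [prod_Iic_val m (fun l => 1 + γ l ω)]
        have hm : m.1 + 1 ∈ Finset.Icc 1 (n + 2) := by
          rw [Finset.mem_Icc]
          have := m.isLt
          omega
        exact (hcond _ hm).mp (h _ hm)
      · intro h k hk
        have hk' := Finset.mem_Icc.mp hk
        refine (hcond k hk).mpr ?_
        have hthis := h ⟨k - 1, by omega⟩
        rw [one_mul] at hthis
        have hval : ((⟨k - 1, by omega⟩ : Fin (n + 2)) : ℕ) = k - 1 := rfl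
        have hthis2 : (∏ i ∈ Finset.Iic (⟨k - 1, by omega⟩ : Fin (n + 2)),
            (1 + γ (i.1 + 1) ω)) < T (k - 1) := hthis
        rw [prod_Iic_val (⟨k - 1, by omega⟩ : Fin (n + 2)) (fun l => 1 + γ l ω)] at hthis2
        have hk1 : k - 1 + 1 = k := by omega
        rw [hval, hk1] at hthis2
        have hTk : T (k - 1) = (2:ℝ) ^ (∑ l ∈ Finset.Icc 1 k, R l) := by
          show (2:ℝ) ^ (∑ l ∈ Finset.Icc 1 (k - 1 + 1), R l) = _
          rw [hk1]
        rw [hTk] at hthis2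
        exact hthis2
    exact propext hiff
  -- the law of Γ
  have hmap : Measure.map Γ μ = Measure.pi (fun i : Fin (n + 2) => expMeasure (L i.1)) := by
    refine (Measure.pi_eq fun s hs => ?_).symm
    rw [Measure.map_apply hΓmeas (MeasurableSet.univ_pi hs)]
    have hpre : Γ ⁻¹' (Set.univ.pi s)
        = ⋂ i ∈ (Finset.univ : Finset (Fin (n + 2))), (fun ω => γ (i.1 + 1) ω) ⁻¹' (s i) := by
      ext ω
      simp [hΓdef, Set.mem_pi]
    rw [hpre, hind.measure_inter_preimage_eq_mul Finset.univ (fun i _ => hs i)]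
    refine Finset.prod_congr rfl fun i _ => ?_
    have hi : i.1 + 1 ∈ Finset.Icc 1 (n + 2) := by
      rw [Finset.mem_Icc]
      have := i.isLt
      omega
    rw [← Measure.map_apply (hmeas _ hi) (hs i), hdist _ hi]
  have hΓS : μ (Γ ⁻¹' boxSet (n + 2) T 1)
      = (Measure.pi fun i : Fin (n + 2) => expMeasure (L i.1)) (boxSet (n + 2) T 1) := by
    rw [← hmap, Measure.map_apply hΓmeas (measurableSet_boxSet _ _ _)]
  -- main computation
  have hmain := main_lemma (n + 1) L T hL hT 1 one_pos hy1
  -- bridging nestedInt and auxInt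
  have hbridge : nestedInt σ2 P (fun m => ∑ l ∈ Finset.Icc 1 m, R l) (n + 2) (n + 2 - 1) 1
      = auxInt (n + 1) L T 1 := by
    have h1 : n + 2 - 1 = n + 1 := by omega
    have hfix := nestedInt_eq_auxInt σ2 P (fun m => ∑ l ∈ Finset.Icc 1 m, R l)
      (n + 2) (n + 1) (by omega)
    rw [h1, hfix]
    have h2 : (fun i => σ2 / P (n + 2 - (n + 1) + i)) = L := by
      funext i
      have hh : n + 2 - (n + 1) + i = i + 1 := by omega
      rw [hh, hLdef]
    have h3 : (fun i => (2:ℝ) ^ ((fun m => ∑ l ∈ Finset.Icc 1 m, R l) (n + 2 - (n + 1) + i)))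
        = T := by
      funext i
      show (2:ℝ) ^ (∑ l ∈ Finset.Icc 1 (n + 2 - (n + 1) + i), R l) = T i
      have hh : n + 2 - (n + 1) + i = i + 1 := by omega
      rw [hh, hTdef]
    rw [h2, h3]
  rw [hsub, hΓS, hbridge, hmain]
  -- final algebra
  have hprod : (∏ k ∈ Finset.Icc 1 (n + 2), (σ2 / P k) * Real.exp (σ2 / P k))
      = ∏ i ∈ Finset.range (n + 1 + 1), L i * Real.exp (L i) := by
    rw [← Finset.Ico_add_one_right_eq_Icc, Finset.prod_Ico_eq_prod_range]
    have hnn : n + 2 + 1 - 1 = n + 1 + 1 := by omega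
    rw [hnn]
    refine Finset.prod_congr rfl fun i _ => ?_
    have hh : 1 + i = i + 1 := by omega
    rw [hh, hLdef]
  rw [hprod]
  have hCC : (∏ i ∈ Finset.range (n + 1 + 1), L i * Real.exp (L i))
      * (∏ i ∈ Finset.range (n + 1 + 1), (L i)⁻¹ * Real.exp (-L i)) = 1 := by
    rw [← Finset.prod_mul_distrib]
    refine Finset.prod_eq_one fun i hi => ?_
    rw [Finset.mem_range] at hi
    have hLi := hL i (by omega)
    rw [show L i * Real.exp (L i) * ((L i)⁻¹ * Real.exp (-L i))
        = (L i * (L i)⁻¹) * (Real.exp (L i) * Real.exp (-L i)) by ring,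
      mul_inv_cancel₀ hLi.ne', ← Real.exp_add, add_neg_cancel, Real.exp_zero, one_mul]
  rw [← mul_assoc, hCC, one_mul, one_mul]
end
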